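/- The logarithmic mean LMTD(x,y) = (x − y)/(ln x − ln y) (with LMTD(x,x)=x) is a concave function on the open positive quadrant {(x,y) : x > 0, y > 0}. -/

import Mathlib

open Real intervalIntegral

noncomputable def LMTD (x y : ℝ) : ℝ :=
  if x = y then x else (x - y) / (Real.log x - Real.log y)

lemma pos_combo {a b x y : ℝ} (ha : 0 ≤ a) (hb : 0 ≤ b) (hab : a + b = 1)
    (hx : 0 < x) (hy : 0 < y) : 0 < a * x + b * y := by
  have h : 0 < a ∨ 0 < b := by by_contra hc; push_neg at hc; linarith [hc.1, hc.2]
  rcases h with h | h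
  · exact add_pos_of_pos_of_nonneg (mul_pos h hx) (mul_nonneg hb hy.le)
  · exact add_pos_of_nonneg_of_pos (mul_nonneg ha hx.le) (mul_pos h hy)

lemma lmtd_integral {x y : ℝ} (hx : 0 < x) (hy : 0 < y) :
    LMTD x y = ∫ s in (0:ℝ)..1, Real.exp (s * Real.log x + (1 - s) * Real.log y) := by
  rcases eq_or_ne x y with h | h
  · subst h
    have hcong : (fun s : ℝ => Real.exp (s * Real.log x + (1 - s) * Real.log x))
        = fun _ : ℝ => x := by
      funext s
      rw [show s * Real.log x + (1 - s) * Real.log x = Real.log x by ring, Real.exp_log hx]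
    rw [hcong]
    simp [LMTD]
  · have hc : Real.log x - Real.log y ≠ 0 := by
      intro hlog
      apply h
      have : Real.log x = Real.log y := by linarith [hlog]
      calc x = Real.exp (Real.log x) := (Real.exp_log hx).symm
        _ = Real.exp (Real.log y) := by rw [this]
        _ = y := Real.exp_log hy
    set c := Real.log x - Real.log y with hcdef
    have hint : (fun s : ℝ => Real.exp (s * Real.log x + (1 - s) * Real.log y))
        = fun s : ℝ => Real.exp (s * c) * y := by
      funext s
      rw [show s * Real.log x + (1 - s) * Real.log y = s * c + Real.log y by
        rw [hcdef]; ring, Real.exp_add, Real.exp_log hy]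
    rw [hint, intervalIntegral.integral_mul_const]
    have h1 : (∫ s in (0:ℝ)..1, Real.exp (s * c)) = (Real.exp c - 1) / c := by
      rw [intervalIntegral.integral_comp_mul_right Real.exp hc]
      simp [integral_exp, smul_eq_mul, div_eq_inv_mul]
    rw [h1]
    have hec : Real.exp c = x / y := by
      rw [hcdef, Real.exp_sub, Real.exp_log hx, Real.exp_log hy]
    rw [hec, LMTD, if_neg h]
    field_simp
    ring_nf
    rw [← hcdef]
    exact mul_inv_cancel₀ hc

lemma geom_superadd {s a b x₁ y₁ x₂ y₂ : ℝ} (hs0 : 0 ≤ s) (hs1 : s ≤ 1)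
    (ha : 0 ≤ a) (hb : 0 ≤ b) (hab : a + b = 1)
    (hx₁ : 0 < x₁) (hy₁ : 0 < y₁) (hx₂ : 0 < x₂) (hy₂ : 0 < y₂) :
    a * (x₁ ^ s * y₁ ^ (1 - s)) + b * (x₂ ^ s * y₂ ^ (1 - s)) ≤
      (a * x₁ + b * x₂) ^ s * (a * y₁ + b * y₂) ^ (1 - s) := by
  have hX : 0 < a * x₁ + b * x₂ := pos_combo ha hb hab hx₁ hx₂
  have hY : 0 < a * y₁ + b * y₂ := pos_combo ha hb hab hy₁ hy₂
  have hP : 0 < (a * x₁ + b * x₂) ^ s * (a * y₁ + b * y₂) ^ (1 - s) := by positivity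
  have hXs : (0:ℝ) < (a * x₁ + b * x₂) ^ s := by positivity
  have hYs : (0:ℝ) < (a * y₁ + b * y₂) ^ (1 - s) := by positivity
  have key : ∀ u v : ℝ, 0 < u → 0 < v →
      u ^ s * v ^ (1 - s) ≤
        (s * (u / (a * x₁ + b * x₂)) + (1 - s) * (v / (a * y₁ + b * y₂))) *
          ((a * x₁ + b * x₂) ^ s * (a * y₁ + b * y₂) ^ (1 - s)) := by
    intro u v hu hv
    have h := Real.geom_mean_le_arith_mean2_weighted (w₁ := s) (w₂ := 1 - s) hs0 (by linarith)
      (div_pos hu hX).le (div_pos hv hY).le (by ring)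
    have heq : (u / (a * x₁ + b * x₂)) ^ s * (v / (a * y₁ + b * y₂)) ^ (1 - s) *
        ((a * x₁ + b * x₂) ^ s * (a * y₁ + b * y₂) ^ (1 - s)) = u ^ s * v ^ (1 - s) := by
      rw [Real.div_rpow hu.le hX.le, Real.div_rpow hv.le hY.le]
      field_simp
    calc u ^ s * v ^ (1 - s)
        = (u / (a * x₁ + b * x₂)) ^ s * (v / (a * y₁ + b * y₂)) ^ (1 - s) *
          ((a * x₁ + b * x₂) ^ s * (a * y₁ + b * y₂) ^ (1 - s)) := heq.symm
      _ ≤ _ := mul_le_mul_of_nonneg_right h hP.le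
  have e1 := key x₁ y₁ hx₁ hy₁
  have e2 := key x₂ y₂ hx₂ hy₂
  have hsum : a * (s * (x₁ / (a * x₁ + b * x₂)) + (1 - s) * (y₁ / (a * y₁ + b * y₂)))
      + b * (s * (x₂ / (a * x₁ + b * x₂)) + (1 - s) * (y₂ / (a * y₁ + b * y₂))) = 1 := by
    field_simp
    ring
  calc a * (x₁ ^ s * y₁ ^ (1 - s)) + b * (x₂ ^ s * y₂ ^ (1 - s))
      ≤ a * ((s * (x₁ / (a * x₁ + b * x₂)) + (1 - s) * (y₁ / (a * y₁ + b * y₂))) *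
          ((a * x₁ + b * x₂) ^ s * (a * y₁ + b * y₂) ^ (1 - s)))
        + b * ((s * (x₂ / (a * x₁ + b * x₂)) + (1 - s) * (y₂ / (a * y₁ + b * y₂))) *
          ((a * x₁ + b * x₂) ^ s * (a * y₁ + b * y₂) ^ (1 - s))) :=
        add_le_add (mul_le_mul_of_nonneg_left e1 ha) (mul_le_mul_of_nonneg_left e2 hb)
    _ = (a * (s * (x₁ / (a * x₁ + b * x₂)) + (1 - s) * (y₁ / (a * y₁ + b * y₂)))
        + b * (s * (x₂ / (a * x₁ + b * x₂)) + (1 - s) * (y₂ / (a * y₁ + b * y₂)))) *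
          ((a * x₁ + b * x₂) ^ s * (a * y₁ + b * y₂) ^ (1 - s)) := by ring
    _ = (a * x₁ + b * x₂) ^ s * (a * y₁ + b * y₂) ^ (1 - s) := by rw [hsum, one_mul]

theorem lmtd_concaveOn :
    ConcaveOn ℝ {p : ℝ × ℝ | 0 < p.1 ∧ 0 < p.2} (fun p => LMTD p.1 p.2) := by
  refine ⟨?_, ?_⟩
  · exact ((convex_Ioi (0:ℝ)).linear_preimage (LinearMap.fst ℝ ℝ ℝ)).inter
      ((convex_Ioi (0:ℝ)).linear_preimage (LinearMap.snd ℝ ℝ ℝ))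
  · rintro ⟨x₁, y₁⟩ ⟨hx₁, hy₁⟩ ⟨x₂, y₂⟩ ⟨hx₂, hy₂⟩ a b ha hb hab
    simp only at hx₁ hy₁ hx₂ hy₂
    simp only [Prod.smul_mk, Prod.mk_add_mk, smul_eq_mul]
    have hX : 0 < a * x₁ + b * x₂ := pos_combo ha hb hab hx₁ hx₂
    have hY : 0 < a * y₁ + b * y₂ := pos_combo ha hb hab hy₁ hy₂
    rw [lmtd_integral hx₁ hy₁, lmtd_integral hx₂ hy₂, lmtd_integral hX hY]
    have cont : ∀ u v : ℝ, Continuous fun s : ℝ => Real.exp (s * u + (1 - s) * v) := by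
      intro u v; continuity
    have i1 : IntervalIntegrable
        (fun s : ℝ => a * Real.exp (s * Real.log x₁ + (1 - s) * Real.log y₁)) MeasureTheory.volume 0 1 :=
      (continuous_const.mul (cont _ _)).intervalIntegrable 0 1
    have i2 : IntervalIntegrable
        (fun s : ℝ => b * Real.exp (s * Real.log x₂ + (1 - s) * Real.log y₂)) MeasureTheory.volume 0 1 :=
      (continuous_const.mul (cont _ _)).intervalIntegrable 0 1
    rw [← intervalIntegral.integral_const_mul,
      ← intervalIntegral.integral_const_mul, ← intervalIntegral.integral_add i1 i2]
    apply intervalIntegral.integral_mono_on zero_le_one (i1.add i2)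
      ((cont _ _).intervalIntegrable 0 1)
    intro s hs
    obtain ⟨hs0, hs1⟩ := hs
    have hrw : ∀ u v : ℝ, 0 < u → 0 < v →
        Real.exp (s * Real.log u + (1 - s) * Real.log v) = u ^ s * v ^ (1 - s) := by
      intro u v hu hv
      rw [Real.rpow_def_of_pos hu, Real.rpow_def_of_pos hv, ← Real.exp_add]
      ring_nf
    simp only [hrw _ _ hx₁ hy₁, hrw _ _ hx₂ hy₂, hrw _ _ hX hY]
    exact geom_superadd hs0 hs1 ha hb hab hx₁ hy₁ hx₂ hy₂
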